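/- Let n ≥ 3 and let R be a 4-tensor on ℝⁿ with curvature symmetries, satisfying the first Bianchi identity, and with vanishing double trace Σ_{i,j} R_{ijij} = 0. Then 2·|Σ_{i,j,k,l,h,m} R_{ijlk} R_{jhkm} R_{himl}| + (1/2)·|Σ_{i,j,k,l,h,m} R_{ijlk} R_{hmij} R_{lkhm}| ≤ [2(n²+n−4)/√((n−1)n(n+1)(n+2)) + (n²−n−4)/(2√((n−2)(n−1)n(n+1)))] · ‖R‖³. -/

import Mathlib

open Finset Matrix

lemma okumura_one_sided {ι : Type} [Fintype ι] [DecidableEq ι]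
    (hd : 3 ≤ Fintype.card ι) (g : ι → ℝ) (hg : ∑ i, g i = 0) :
    -(((Fintype.card ι : ℝ) - 2) /
        Real.sqrt ((Fintype.card ι : ℝ) * ((Fintype.card ι : ℝ) - 1)) *
        Real.sqrt (∑ i, g i ^ 2) ^ 3) ≤ ∑ i, g i ^ 3 := by
  obtain ⟨d, hdcast⟩ : ∃ x : ℝ, (Fintype.card ι : ℝ) = x := ⟨_, rfl⟩
  obtain ⟨s2, hs2⟩ : ∃ x : ℝ, (∑ i, g i ^ 2) = x := ⟨_, rfl⟩
  obtain ⟨S3, hS3⟩ : ∃ x : ℝ, (∑ i, g i ^ 3) = x := ⟨_, rfl⟩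
  rw [hdcast, hs2, hS3]
  have hd3 : (3 : ℝ) ≤ d := by rw [← hdcast]; exact_mod_cast hd
  have hs2nn : 0 ≤ s2 := hs2 ▸ Finset.sum_nonneg fun i _ => sq_nonneg _
  have hssq : Real.sqrt s2 ^ 2 = s2 := Real.sq_sqrt hs2nn
  have hsnn : 0 ≤ Real.sqrt s2 := Real.sqrt_nonneg _
  have hDpos : (0:ℝ) < d * (d - 1) := by nlinarith
  have hsqDpos : (0:ℝ) < Real.sqrt (d * (d-1)) := Real.sqrt_pos.mpr hDpos
  obtain ⟨t, htdef⟩ : ∃ x : ℝ, Real.sqrt s2 / Real.sqrt (d * (d - 1)) = x := ⟨_, rfl⟩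
  have htnn : 0 ≤ t := htdef ▸ div_nonneg hsnn hsqDpos.le
  have ht2 : t ^ 2 * (d * (d-1)) = s2 := by
    rw [← htdef, div_pow, Real.sq_sqrt hDpos.le, div_mul_cancel₀ _ hDpos.ne', hssq]
  have hlow : ∀ i, -((d-1) * t) ≤ g i := by
    intro i
    have hadd := Finset.add_sum_erase univ g (mem_univ i)
    have h1 : (∑ j ∈ univ.erase i, g j) = - g i := by linarith [hadd, hg]
    have h2 : (∑ j ∈ univ.erase i, g j * 1) ^ 2 ≤
        (∑ j ∈ univ.erase i, g j ^ 2) * (∑ j ∈ univ.erase i, (1:ℝ) ^ 2) :=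
      Finset.sum_mul_sq_le_sq_mul_sq _ _ _
    have hadd2 := Finset.add_sum_erase univ (fun j => g j ^ 2) (mem_univ i)
    have h3 : (∑ j ∈ univ.erase i, g j ^ 2) = s2 - g i ^ 2 := by
      rw [hs2] at hadd2; linarith [hadd2]
    have hcard : ((univ.erase i).card : ℝ) = d - 1 := by
      rw [Finset.card_erase_of_mem (mem_univ i), Finset.card_univ,
        Nat.cast_sub (by omega : 1 ≤ Fintype.card ι), hdcast]
      norm_num
    have h4 : (∑ j ∈ univ.erase i, (1:ℝ) ^ 2) = d - 1 := by
      simp only [one_pow, Finset.sum_const, nsmul_eq_mul, mul_one, hcard]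
    have h5 : g i ^ 2 ≤ (s2 - g i ^ 2) * (d - 1) := by
      simp only [mul_one] at h2
      rw [h1, h3, h4] at h2
      nlinarith [h2]
    have h6 : g i ^ 2 ≤ ((d-1)*t)^2 := by nlinarith [ht2, h5]
    have := abs_le_of_sq_le_sq' h6
      (mul_nonneg (by linarith : (0:ℝ) ≤ d - 1) htnn)
    exact this.1
  have hpos : 0 ≤ ∑ i, (g i + (d-1)*t) * (g i - t)^2 :=
    Finset.sum_nonneg fun i _ => mul_nonneg (by linarith [hlow i]) (sq_nonneg _)
  have hexp : ∑ i, (g i + (d-1)*t) * (g i - t)^2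
      = S3 + (d-3)*t*s2 - (2*d-3)*t^2*0 + d*(d-1)*t^3 := by
    have hrw : ∀ i, (g i + (d-1)*t) * (g i - t)^2
        = g i ^ 3 + (d-3)*t*(g i ^2) - (2*d-3)*t^2*(g i) + (d-1)*t^3 := by
      intro i; ring
    rw [Finset.sum_congr rfl fun i _ => hrw i]
    rw [Finset.sum_add_distrib, Finset.sum_sub_distrib, Finset.sum_add_distrib,
      ← Finset.mul_sum, ← Finset.mul_sum, hs2, hg, hS3, Finset.sum_const,
      Finset.card_univ, nsmul_eq_mul, hdcast]
    ring
  have hd13 : d*(d-1)*t^3 = t * s2 := by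
    have h : d*(d-1)*t^3 = t * (t^2 * (d*(d-1))) := by ring
    rw [h, ht2]
  have hfinal : -((d-2) * t * s2) ≤ S3 := by
    rw [hexp] at hpos; nlinarith [hpos, hd13]
  have hts : t * s2 = Real.sqrt s2 ^ 3 / Real.sqrt (d*(d-1)) := by
    rw [← htdef]
    rw [div_mul_eq_mul_div]
    congr 1
    nlinarith [hssq]
  calc -((d - 2) / Real.sqrt (d * (d - 1)) * Real.sqrt s2 ^ 3)
      = -((d-2) * (t * s2)) := by rw [hts]; ring
    _ ≤ S3 := by linarith [hfinal]

lemma okumura_scalar {ι : Type} [Fintype ι] [DecidableEq ι]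
    (hd : 3 ≤ Fintype.card ι) (f : ι → ℝ) (h0 : ∑ i, f i = 0) :
    |∑ i, f i ^ 3| ≤ ((Fintype.card ι : ℝ) - 2) /
      Real.sqrt ((Fintype.card ι : ℝ) * ((Fintype.card ι : ℝ) - 1)) *
      Real.sqrt (∑ i, f i ^ 2) ^ 3 := by
  have h1 := okumura_one_sided hd f h0
  have h2 := okumura_one_sided hd (fun i => -f i) (by simpa using h0)
  have e3 : ∑ i, (-f i) ^ 3 = -∑ i, f i ^ 3 := by
    rw [← Finset.sum_neg_distrib]; exact Finset.sum_congr rfl fun i _ => by ring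
  have e2 : ∑ i, (-f i) ^ 2 = ∑ i, f i ^ 2 := Finset.sum_congr rfl fun i _ => by ring
  simp only [e3, e2] at h2
  rw [abs_le]
  exact ⟨h1, by linarith [h2]⟩


lemma trace_pow_eq {ι : Type} [Fintype ι] [DecidableEq ι] {A : Matrix ι ι ℝ}
    (hA : A.IsHermitian) (k : ℕ) :
    (A ^ k).trace = ∑ i, hA.eigenvalues i ^ k := by
  have hU1 : (star (hA.eigenvectorUnitary : Matrix ι ι ℝ)) *
      (hA.eigenvectorUnitary : Matrix ι ι ℝ) = 1 := by
    exact_mod_cast Unitary.coe_star_mul_self hA.eigenvectorUnitary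
  have hU2 : (hA.eigenvectorUnitary : Matrix ι ι ℝ) *
      (star (hA.eigenvectorUnitary : Matrix ι ι ℝ)) = 1 := by
    exact_mod_cast Unitary.coe_mul_star_self hA.eigenvectorUnitary
  have hAU : A * (hA.eigenvectorUnitary : Matrix ι ι ℝ)
      = (hA.eigenvectorUnitary : Matrix ι ι ℝ) *
        diagonal (RCLike.ofReal ∘ hA.eigenvalues) := by
    have h := congrArg (fun X => X * (hA.eigenvectorUnitary : Matrix ι ι ℝ))
      hA.spectral_theorem
    simp only [Unitary.conjStarAlgAut_apply, Unitary.coe_star] at h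
    rw [h, mul_assoc, mul_assoc, hU1, mul_one]
  have key : ∀ m : ℕ, A ^ m * (hA.eigenvectorUnitary : Matrix ι ι ℝ)
      = (hA.eigenvectorUnitary : Matrix ι ι ℝ) *
        (diagonal (RCLike.ofReal ∘ hA.eigenvalues)) ^ m := by
    intro m
    induction m with
    | zero => simp
    | succ m ih =>
      rw [pow_succ, pow_succ, mul_assoc, hAU, ← mul_assoc, ih, mul_assoc]
  have h1 : (A ^ k).trace = ((diagonal (RCLike.ofReal ∘ hA.eigenvalues)) ^ k).trace := by
    calc (A ^ k).trace = (A ^ k * 1).trace := by rw [mul_one]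
      _ = (A ^ k * ((hA.eigenvectorUnitary : Matrix ι ι ℝ) *
            (star (hA.eigenvectorUnitary : Matrix ι ι ℝ)))).trace := by rw [hU2]
      _ = ((A ^ k * (hA.eigenvectorUnitary : Matrix ι ι ℝ)) *
            (star (hA.eigenvectorUnitary : Matrix ι ι ℝ))).trace := by rw [mul_assoc]
      _ = (((hA.eigenvectorUnitary : Matrix ι ι ℝ) *
            (diagonal (RCLike.ofReal ∘ hA.eigenvalues)) ^ k) *
            (star (hA.eigenvectorUnitary : Matrix ι ι ℝ))).trace := by rw [key]
      _ = ((star (hA.eigenvectorUnitary : Matrix ι ι ℝ) *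
            (hA.eigenvectorUnitary : Matrix ι ι ℝ)) *
            (diagonal (RCLike.ofReal ∘ hA.eigenvalues)) ^ k).trace := by
            rw [Matrix.trace_mul_cycle, mul_assoc]
      _ = ((diagonal (RCLike.ofReal ∘ hA.eigenvalues)) ^ k).trace := by rw [hU1, one_mul]
  rw [h1, Matrix.diagonal_pow, Matrix.trace_diagonal]
  simp [RCLike.ofReal]

/-- Okumura-type estimate, in explicit sum form. -/
lemma okumura_matrix {ι : Type} [Fintype ι] [DecidableEq ι]
    (hd : 3 ≤ Fintype.card ι) (A : ι → ι → ℝ)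
    (hsym : ∀ p q, A p q = A q p) (htr : ∑ p, A p p = 0) :
    |∑ p, ∑ q, ∑ r, A p q * A q r * A r p| ≤
      ((Fintype.card ι : ℝ) - 2) /
        Real.sqrt ((Fintype.card ι : ℝ) * ((Fintype.card ι : ℝ) - 1)) *
        Real.sqrt (∑ p, ∑ q, (A p q) ^ 2) ^ 3 := by
  have hA : (Matrix.of A).IsHermitian := by
    ext p q
    simp only [Matrix.conjTranspose_apply, Matrix.of_apply, star_trivial]
    exact hsym q p
  have h1 : ((Matrix.of A) ^ 1).trace = ∑ p, A p p := by
    simp [Matrix.trace, Matrix.diag]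
  have h2 : ((Matrix.of A) ^ 2).trace = ∑ p, ∑ q, (A p q) ^ 2 := by
    rw [pow_two]
    simp only [Matrix.trace, Matrix.diag_apply, Matrix.mul_apply, Matrix.of_apply]
    exact Finset.sum_congr rfl fun p _ => Finset.sum_congr rfl fun q _ => by
      rw [hsym q p]; ring
  have h3 : ((Matrix.of A) ^ 3).trace = ∑ p, ∑ q, ∑ r, A p q * A q r * A r p := by
    have hpow : (Matrix.of A) ^ 3 = Matrix.of A * Matrix.of A * Matrix.of A := by
      rw [pow_succ, pow_two]
    rw [hpow]
    simp only [Matrix.trace, Matrix.diag_apply, Matrix.mul_apply, Matrix.of_apply,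
      Finset.sum_mul]
    exact Finset.sum_congr rfl fun p _ => Finset.sum_comm
  have e1 := trace_pow_eq hA 1
  have e2 := trace_pow_eq hA 2
  have e3 := trace_pow_eq hA 3
  rw [h1] at e1
  rw [h2] at e2
  rw [h3] at e3
  have h0 : ∑ i, hA.eigenvalues i = 0 := by
    rw [htr] at e1
    simpa using e1.symm
  rw [e3, e2]
  exact okumura_scalar hd hA.eigenvalues h0


variable {n : ℕ}

lemma sum_trichotomy (g : Fin n × Fin n → ℝ) :
    ∑ p, g p = (∑ p ∈ univ.filter (fun p : Fin n × Fin n => p.1 < p.2), g p)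
      + (∑ p ∈ univ.filter (fun p : Fin n × Fin n => p.2 < p.1), g p)
      + (∑ p ∈ univ.filter (fun p : Fin n × Fin n => p.1 = p.2), g p) := by
  rw [Finset.sum_filter, Finset.sum_filter, Finset.sum_filter,
    ← Finset.sum_add_distrib, ← Finset.sum_add_distrib]
  refine Finset.sum_congr rfl fun p _ => ?_
  rcases lt_trichotomy p.1 p.2 with h | h | h
  · simp [h, lt_asymm h, h.ne]
  · simp [h, lt_irrefl]
  · simp [h, lt_asymm h, h.ne']

lemma sum_gt_eq_sum_lt (g : Fin n × Fin n → ℝ) (hσ : ∀ p : Fin n × Fin n, g p.swap = g p) :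
    (∑ p ∈ univ.filter (fun p : Fin n × Fin n => p.2 < p.1), g p)
      = ∑ p ∈ univ.filter (fun p : Fin n × Fin n => p.1 < p.2), g p := by
  rw [Finset.sum_filter, Finset.sum_filter]
  refine Fintype.sum_equiv (Equiv.prodComm _ _) _ _ fun p => ?_
  simp only [Equiv.prodComm_apply]
  rcases lt_or_ge p.2 p.1 with h | h
  · simp [h, ← hσ p]
  · simp [not_lt_of_ge h]

lemma fold_lt (g : Fin n × Fin n → ℝ) (hσ : ∀ p : Fin n × Fin n, g p.swap = g p)
    (hdiag : ∀ p : Fin n × Fin n, p.1 = p.2 → g p = 0) :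
    ∑ p, g p = 2 * ∑ p : {p : Fin n × Fin n // p.1 < p.2}, g p.val := by
  rw [sum_trichotomy g, sum_gt_eq_sum_lt g hσ]
  have hz : (∑ p ∈ univ.filter (fun p : Fin n × Fin n => p.1 = p.2), g p) = 0 :=
    Finset.sum_eq_zero fun p hp => hdiag p (by simpa using (Finset.mem_filter.mp hp).2)
  rw [hz, Finset.sum_subtype (p := fun p : Fin n × Fin n => p.1 < p.2)
    (univ.filter (fun p : Fin n × Fin n => p.1 < p.2)) (by simp) g]
  ring

lemma fold_le (g : Fin n × Fin n → ℝ) (hσ : ∀ p : Fin n × Fin n, g p.swap = g p) :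
    ∑ p, g p = ∑ p : {p : Fin n × Fin n // p.1 ≤ p.2},
      (if p.val.1 = p.val.2 then (1:ℝ) else 2) * g p.val := by
  rw [sum_trichotomy g, sum_gt_eq_sum_lt g hσ]
  rw [← Finset.sum_subtype (p := fun p : Fin n × Fin n => p.1 ≤ p.2)
    (univ.filter (fun p : Fin n × Fin n => p.1 ≤ p.2)) (by simp)
    (fun p : Fin n × Fin n => (if p.1 = p.2 then (1:ℝ) else 2) * g p)]
  have hsplit : univ.filter (fun p : Fin n × Fin n => p.1 ≤ p.2)
      = univ.filter (fun p : Fin n × Fin n => p.1 < p.2)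
        ∪ univ.filter (fun p : Fin n × Fin n => p.1 = p.2) := by
    rw [← Finset.filter_or]
    exact Finset.filter_congr fun p _ => by
      constructor
      · intro h; exact lt_or_eq_of_le h
      · intro h; rcases h with h | h; exacts [le_of_lt h, le_of_eq h]
  rw [hsplit, Finset.sum_union]
  · have e1 : ∑ p ∈ univ.filter (fun p : Fin n × Fin n => p.1 < p.2),
        (if p.1 = p.2 then (1:ℝ) else 2) * g p
        = ∑ p ∈ univ.filter (fun p : Fin n × Fin n => p.1 < p.2), 2 * g p := by
      refine Finset.sum_congr rfl fun p hp => ?_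
      have := (Finset.mem_filter.mp hp).2
      simp [ne_of_lt this]
    have e2 : ∑ p ∈ univ.filter (fun p : Fin n × Fin n => p.1 = p.2),
        (if p.1 = p.2 then (1:ℝ) else 2) * g p
        = ∑ p ∈ univ.filter (fun p : Fin n × Fin n => p.1 = p.2), g p := by
      refine Finset.sum_congr rfl fun p hp => ?_
      have := (Finset.mem_filter.mp hp).2
      simp [this]
    rw [e1, e2, ← Finset.mul_sum]
    ring
  · rw [Finset.disjoint_filter]
    intro p _ h
    exact fun hc => absurd hc (ne_of_lt h)

lemma filter_le_split : (univ.filter (fun p : Fin n × Fin n => p.1 ≤ p.2))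
    = univ.filter (fun p : Fin n × Fin n => p.1 < p.2)
      ∪ univ.filter (fun p : Fin n × Fin n => p.1 = p.2) := by
  rw [← Finset.filter_or]
  exact Finset.filter_congr fun p _ => by
    constructor
    · intro h; exact lt_or_eq_of_le h
    · intro h; rcases h with h | h; exacts [le_of_lt h, le_of_eq h]

lemma card_eq_diag : (univ.filter (fun p : Fin n × Fin n => p.1 = p.2)).card = n := by
  have h : ((univ.filter (fun p : Fin n × Fin n => p.1 = p.2)).card : ℝ) = n := by
    rw [← Finset.sum_boole, Fintype.sum_prod_type]
    simp [Finset.sum_ite_eq]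
  exact_mod_cast h

lemma card_lt_gt : (univ.filter (fun p : Fin n × Fin n => p.2 < p.1)).card
    = (univ.filter (fun p : Fin n × Fin n => p.1 < p.2)).card := by
  have h := sum_gt_eq_sum_lt (n := n) (fun _ => (1:ℝ)) (fun _ => rfl)
  simp only [Finset.sum_const, nsmul_eq_mul, mul_one] at h
  exact_mod_cast h

lemma two_card_lt : 2 * (univ.filter (fun p : Fin n × Fin n => p.1 < p.2)).card + n
    = n * n := by
  have h := sum_trichotomy (n := n) (fun _ => (1:ℝ))
  simp only [Finset.sum_const, nsmul_eq_mul, mul_one, Finset.card_univ,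
    Fintype.card_prod, Fintype.card_fin, card_eq_diag, card_lt_gt] at h
  have : ((n*n : ℕ) : ℝ) = 2 * ((univ.filter (fun p : Fin n × Fin n => p.1 < p.2)).card : ℝ)
      + (n : ℝ) := by push_cast; push_cast at h; linarith
  exact_mod_cast this.symm

lemma card_le_eq : (univ.filter (fun p : Fin n × Fin n => p.1 ≤ p.2)).card
    = (univ.filter (fun p : Fin n × Fin n => p.1 < p.2)).card + n := by
  rw [filter_le_split, Finset.card_union_of_disjoint, card_eq_diag]
  rw [Finset.disjoint_filter]
  intro p _ h
  exact fun hc => absurd hc (ne_of_lt h)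

lemma card_subtype_lt : Fintype.card {p : Fin n × Fin n // p.1 < p.2}
    = (univ.filter (fun p : Fin n × Fin n => p.1 < p.2)).card :=
  Fintype.card_subtype _

lemma card_subtype_le : Fintype.card {p : Fin n × Fin n // p.1 ≤ p.2}
    = (univ.filter (fun p : Fin n × Fin n => p.1 < p.2)).card + n := by
  rw [Fintype.card_subtype, card_le_eq]


lemma sum_swap_reindex {α : Type*} [Fintype α] (G : α × α → ℝ) :
    ∑ x : α × α, G x.swap = ∑ x : α × α, G x :=
  Fintype.sum_equiv (Equiv.prodComm α α) _ _ (fun x => rfl)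

lemma sum_asym {α : Type*} [Fintype α] (G : α × α → ℝ)
    (h : ∀ x, G x.swap = -G x) : ∑ x : α × α, G x = 0 := by
  have h1 := sum_swap_reindex G
  have h2 : ∑ x : α × α, G x.swap = -∑ x : α × α, G x := by
    rw [← Finset.sum_neg_distrib]
    exact Finset.sum_congr rfl fun x _ => h x
  linarith [h1, h2]

lemma sum_rot {β : Type*} [Fintype β] (G : β → β → β → ℝ) :
    (∑ l, ∑ j, ∑ k, G l j k) = ∑ j, ∑ k, ∑ l, G l j k := by
  rw [Finset.sum_comm]
  exact Finset.sum_congr rfl fun j _ => Finset.sum_comm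

section Antisym
variable {n : ℕ}

lemma diag_swap_eq {p : Fin n × Fin n} (h : p.1 = p.2) : p.swap = p := by
  cases p; simp only [Prod.swap_prod_mk]; simp only at h; rw [h]

lemma card_lt_ge (hn : 3 ≤ n) : 3 ≤ Fintype.card {p : Fin n × Fin n // p.1 < p.2} := by
  have h := two_card_lt (n := n)
  rw [card_subtype_lt]
  nlinarith [h, hn]

lemma okumura_antisym (hn : 3 ≤ n) (X : (Fin n × Fin n) → (Fin n × Fin n) → ℝ)
    (hsym : ∀ p q, X p q = X q p)
    (hl : ∀ p q, X p.swap q = -X p q)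
    (hr : ∀ p q, X p q.swap = -X p q)
    (htr : ∑ p, X p p = 0) :
    |∑ p, ∑ q, ∑ r, X p q * X q r * X r p| ≤
      ((Fintype.card {p : Fin n × Fin n // p.1 < p.2} : ℝ) - 2) /
        Real.sqrt ((Fintype.card {p : Fin n × Fin n // p.1 < p.2} : ℝ) *
          ((Fintype.card {p : Fin n × Fin n // p.1 < p.2} : ℝ) - 1)) *
        Real.sqrt (∑ p, ∑ q, (X p q)^2) ^ 3 := by
  have hdiag0 : ∀ p q : Fin n × Fin n, p.1 = p.2 → X p q = 0 := by
    intro p q h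
    have h2 := hl p q
    rw [diag_swap_eq h] at h2
    linarith
  have hdiag0r : ∀ p q : Fin n × Fin n, q.1 = q.2 → X p q = 0 := by
    intro p q h
    have h2 := hr p q
    rw [diag_swap_eq h] at h2
    linarith
  have fold3 : (∑ p, ∑ q, ∑ r, X p q * X q r * X r p)
      = 8 * ∑ p : {p : Fin n × Fin n // p.1 < p.2},
          ∑ q : {p : Fin n × Fin n // p.1 < p.2},
          ∑ r : {p : Fin n × Fin n // p.1 < p.2},
            X p.val q.val * X q.val r.val * X r.val p.val := by
    have step1 : (∑ p, ∑ q, ∑ r, X p q * X q r * X r p)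
        = 2 * ∑ p : {p : Fin n × Fin n // p.1 < p.2},
            ∑ q, ∑ r, X p.val q * X q r * X r p.val := by
      refine fold_lt (fun p => ∑ q, ∑ r, X p q * X q r * X r p) (fun p => ?_) (fun p hp => ?_)
      · exact Finset.sum_congr rfl fun q _ => Finset.sum_congr rfl fun r _ => by
          rw [hl p q, hr r p]; ring
      · exact Finset.sum_eq_zero fun q _ => Finset.sum_eq_zero fun r _ => by
          rw [hdiag0 p q hp]; ring
    have step2 : ∀ p' : Fin n × Fin n, (∑ q, ∑ r, X p' q * X q r * X r p')
        = 2 * ∑ q : {p : Fin n × Fin n // p.1 < p.2},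
            ∑ r, X p' q.val * X q.val r * X r p' := by
      intro p'
      refine fold_lt (fun q => ∑ r, X p' q * X q r * X r p') (fun q => ?_) (fun q hq => ?_)
      · exact Finset.sum_congr rfl fun r _ => by rw [hr p' q, hl q r]; ring
      · exact Finset.sum_eq_zero fun r _ => by rw [hdiag0r p' q hq]; ring
    have step3 : ∀ p' q' : Fin n × Fin n, (∑ r, X p' q' * X q' r * X r p')
        = 2 * ∑ r : {p : Fin n × Fin n // p.1 < p.2},
            X p' q' * X q' r.val * X r.val p' := by
      intro p' q'
      refine fold_lt (fun r => X p' q' * X q' r * X r p') (fun r => ?_) (fun r hrr => ?_)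
      · simp only [hr q' r, hl r p']; ring
      · simp only [hdiag0 r p' hrr]; ring
    rw [step1]
    rw [Finset.sum_congr rfl fun p _ => step2 p.val]
    rw [Finset.sum_congr rfl (fun p (_ : p ∈ Finset.univ) => congrArg (2 * ·)
      (Finset.sum_congr rfl fun q _ => step3 p.val q.val))]
    simp only [← Finset.mul_sum]
    ring
  have fold2 : (∑ p, ∑ q, (X p q)^2)
      = 4 * ∑ p : {p : Fin n × Fin n // p.1 < p.2},
          ∑ q : {p : Fin n × Fin n // p.1 < p.2}, (X p.val q.val)^2 := by
    have step1 : (∑ p, ∑ q, (X p q)^2)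
        = 2 * ∑ p : {p : Fin n × Fin n // p.1 < p.2}, ∑ q, (X p.val q)^2 := by
      refine fold_lt (fun p => ∑ q, (X p q)^2) (fun p => ?_) (fun p hp => ?_)
      · exact Finset.sum_congr rfl fun q _ => by rw [hl p q]; ring
      · exact Finset.sum_eq_zero fun q _ => by rw [hdiag0 p q hp]; ring
    have step2 : ∀ p' : Fin n × Fin n, (∑ q, (X p' q)^2)
        = 2 * ∑ q : {p : Fin n × Fin n // p.1 < p.2}, (X p' q.val)^2 := by
      intro p'
      refine fold_lt (fun q => (X p' q)^2) (fun q => ?_) (fun q hq => ?_)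
      · simp only [hr p' q]; ring
      · simp only [hdiag0r p' q hq]; ring
    rw [step1, Finset.sum_congr rfl fun p _ => step2 p.val]
    rw [← Finset.mul_sum]
    ring
  have fold1 : (∑ p, X p p)
      = 2 * ∑ p : {p : Fin n × Fin n // p.1 < p.2}, X p.val p.val := by
    refine fold_lt (fun p => X p p) (fun p => ?_) (fun p hp => hdiag0 p p hp)
    simp only [hl p p.swap, hr p p]; ring
  have htrsub : (∑ p : {p : Fin n × Fin n // p.1 < p.2}, X p.val p.val) = 0 := by
    rw [fold1] at htr; linarith
  have hok := okumura_matrix (card_lt_ge hn)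
    (fun (p q : {p : Fin n × Fin n // p.1 < p.2}) => X p.val q.val)
    (fun p q => hsym p.val q.val) htrsub
  have hSnn : 0 ≤ ∑ p, ∑ q, (X p q)^2 :=
    Finset.sum_nonneg fun p _ => Finset.sum_nonneg fun q _ => sq_nonneg _
  have hsub_eq : (∑ p : {p : Fin n × Fin n // p.1 < p.2},
      ∑ q : {p : Fin n × Fin n // p.1 < p.2}, (X p.val q.val)^2)
      = (∑ p, ∑ q, (X p q)^2) / 4 := by linarith [fold2]
  have hsqrt : Real.sqrt ((∑ p, ∑ q, (X p q)^2) / 4)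
      = Real.sqrt (∑ p, ∑ q, (X p q)^2) / 2 := by
    rw [show ((∑ p, ∑ q, (X p q)^2) / 4) = (∑ p, ∑ q, (X p q)^2) / 2^2 by norm_num,
      Real.sqrt_div hSnn, Real.sqrt_sq (by norm_num : (0:ℝ) ≤ 2)]
  rw [hsub_eq, hsqrt] at hok
  have hcnn : 0 ≤ ((Fintype.card {p : Fin n × Fin n // p.1 < p.2} : ℝ) - 2) /
      Real.sqrt ((Fintype.card {p : Fin n × Fin n // p.1 < p.2} : ℝ) *
        ((Fintype.card {p : Fin n × Fin n // p.1 < p.2} : ℝ) - 1)) := by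
    apply div_nonneg _ (Real.sqrt_nonneg _)
    have := card_lt_ge hn
    have : (3:ℝ) ≤ (Fintype.card {p : Fin n × Fin n // p.1 < p.2} : ℝ) := by
      exact_mod_cast this
    linarith
  calc |∑ p, ∑ q, ∑ r, X p q * X q r * X r p|
      = 8 * |∑ p : {p : Fin n × Fin n // p.1 < p.2},
          ∑ q : {p : Fin n × Fin n // p.1 < p.2},
          ∑ r : {p : Fin n × Fin n // p.1 < p.2},
            X p.val q.val * X q.val r.val * X r.val p.val| := by
        rw [fold3, abs_mul, abs_of_nonneg (by norm_num : (0:ℝ) ≤ 8)]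
    _ ≤ 8 * (((Fintype.card {p : Fin n × Fin n // p.1 < p.2} : ℝ) - 2) /
        Real.sqrt ((Fintype.card {p : Fin n × Fin n // p.1 < p.2} : ℝ) *
          ((Fintype.card {p : Fin n × Fin n // p.1 < p.2} : ℝ) - 1)) *
        (Real.sqrt (∑ p, ∑ q, (X p q)^2) / 2) ^ 3) := by
        exact mul_le_mul_of_nonneg_left hok (by norm_num)
    _ = _ := by ring
end Antisym

section Sym
variable {n : ℕ}

lemma card_le_ge (hn : 3 ≤ n) : 3 ≤ Fintype.card {p : Fin n × Fin n // p.1 ≤ p.2} := by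
  rw [card_subtype_le]; omega

lemma okumura_sym (hn : 3 ≤ n) (Y : (Fin n × Fin n) → (Fin n × Fin n) → ℝ)
    (hsym : ∀ p q, Y p q = Y q p)
    (hl : ∀ p q, Y p.swap q = Y p q)
    (hr : ∀ p q, Y p q.swap = Y p q)
    (htr : ∑ p, Y p p = 0) :
    |∑ p, ∑ q, ∑ r, Y p q * Y q r * Y r p| ≤
      ((Fintype.card {p : Fin n × Fin n // p.1 ≤ p.2} : ℝ) - 2) /
        Real.sqrt ((Fintype.card {p : Fin n × Fin n // p.1 ≤ p.2} : ℝ) *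
          ((Fintype.card {p : Fin n × Fin n // p.1 ≤ p.2} : ℝ) - 1)) *
        Real.sqrt (∑ p, ∑ q, (Y p q)^2) ^ 3 := by
  set PS := {p : Fin n × Fin n // p.1 ≤ p.2} with hPS
  let w : PS → ℝ := fun p => if p.val.1 = p.val.2 then 1 else Real.sqrt 2
  have hw2 : ∀ p : PS, w p ^ 2 = if p.val.1 = p.val.2 then (1:ℝ) else 2 := by
    intro p
    by_cases h : p.val.1 = p.val.2
    · simp [w, h]
    · simp [w, h, Real.sq_sqrt (by norm_num : (0:ℝ) ≤ 2)]
  let B : PS → PS → ℝ := fun p q => w p * w q * Y p.val q.val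
  have hBsym : ∀ p q : PS, B p q = B q p := by
    intro p q; simp only [B]; rw [hsym p.val q.val]; ring
  -- trace
  have fold1Y : (∑ p, Y p p)
      = ∑ p : PS, (if p.val.1 = p.val.2 then (1:ℝ) else 2) * Y p.val p.val := by
    refine fold_le (fun p => Y p p) (fun p => ?_)
    simp only [hl, hr]
  have htrB : (∑ p : PS, B p p) = 0 := by
    have : ∀ p : PS, B p p = (if p.val.1 = p.val.2 then (1:ℝ) else 2) * Y p.val p.val := by
      intro p; simp only [B]
      rw [show w p * w p = w p ^ 2 by ring, hw2 p]
    rw [Finset.sum_congr rfl fun p _ => this p, ← fold1Y, htr]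
  -- squares
  have fold2Y : (∑ p, ∑ q, (Y p q)^2) = ∑ p : PS, ∑ q : PS, (B p q)^2 := by
    have step1 : (∑ p, ∑ q, (Y p q)^2)
        = ∑ p : PS, (if p.val.1 = p.val.2 then (1:ℝ) else 2) * ∑ q, (Y p.val q)^2 := by
      refine fold_le (fun p => ∑ q, (Y p q)^2) (fun p => ?_)
      exact Finset.sum_congr rfl fun q _ => by simp only [hl]
    have step2 : ∀ p' : Fin n × Fin n, (∑ q, (Y p' q)^2)
        = ∑ q : PS, (if q.val.1 = q.val.2 then (1:ℝ) else 2) * (Y p' q.val)^2 := by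
      intro p'
      refine fold_le (fun q => (Y p' q)^2) (fun q => ?_)
      simp only [hr]
    rw [step1, Finset.sum_congr rfl fun p _ => congrArg _ (step2 p.val)]
    refine Finset.sum_congr rfl fun p _ => ?_
    rw [Finset.mul_sum]
    refine Finset.sum_congr rfl fun q _ => ?_
    simp only [B]
    rw [show (w p * w q * Y p.val q.val)^2 = w p ^2 * w q ^2 * (Y p.val q.val)^2 by ring,
      hw2 p, hw2 q]
    ring
  -- triple products
  have fold3Y : (∑ p, ∑ q, ∑ r, Y p q * Y q r * Y r p)
      = ∑ p : PS, ∑ q : PS, ∑ r : PS, B p q * B q r * B r p := by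
    have step1 : (∑ p, ∑ q, ∑ r, Y p q * Y q r * Y r p)
        = ∑ p : PS, (if p.val.1 = p.val.2 then (1:ℝ) else 2) *
            ∑ q, ∑ r, Y p.val q * Y q r * Y r p.val := by
      refine fold_le (fun p => ∑ q, ∑ r, Y p q * Y q r * Y r p) (fun p => ?_)
      exact Finset.sum_congr rfl fun q _ => Finset.sum_congr rfl fun r _ => by
        simp only [hl, hr]
    have step2 : ∀ p' : Fin n × Fin n, (∑ q, ∑ r, Y p' q * Y q r * Y r p')
        = ∑ q : PS, (if q.val.1 = q.val.2 then (1:ℝ) else 2) *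
            ∑ r, Y p' q.val * Y q.val r * Y r p' := by
      intro p'
      refine fold_le (fun q => ∑ r, Y p' q * Y q r * Y r p') (fun q => ?_)
      exact Finset.sum_congr rfl fun r _ => by simp only [hl, hr]
    have step3 : ∀ p' q' : Fin n × Fin n, (∑ r, Y p' q' * Y q' r * Y r p')
        = ∑ r : PS, (if r.val.1 = r.val.2 then (1:ℝ) else 2) *
            (Y p' q' * Y q' r.val * Y r.val p') := by
      intro p' q'
      refine fold_le (fun r => Y p' q' * Y q' r * Y r p') (fun r => ?_)
      simp only [hl, hr]
    rw [step1, Finset.sum_congr rfl fun p _ => congrArg _ (step2 p.val)]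
    rw [Finset.sum_congr rfl (fun p (_ : p ∈ Finset.univ) => congrArg _
      (Finset.sum_congr rfl fun q _ => congrArg _ (step3 p.val q.val)))]
    refine Finset.sum_congr rfl fun p _ => ?_
    rw [Finset.mul_sum]
    refine Finset.sum_congr rfl fun q _ => ?_
    rw [show (if p.val.1 = p.val.2 then (1:ℝ) else 2) *
        ((if q.val.1 = q.val.2 then (1:ℝ) else 2) *
          ∑ r : PS, (if r.val.1 = r.val.2 then (1:ℝ) else 2) *
            (Y p.val q.val * Y q.val r.val * Y r.val p.val))
      = ∑ r : PS, (if p.val.1 = p.val.2 then (1:ℝ) else 2) *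
          (if q.val.1 = q.val.2 then (1:ℝ) else 2) *
          (if r.val.1 = r.val.2 then (1:ℝ) else 2) *
            (Y p.val q.val * Y q.val r.val * Y r.val p.val) by
        rw [Finset.mul_sum, Finset.mul_sum]; exact Finset.sum_congr rfl fun r _ => by ring]
    refine Finset.sum_congr rfl fun r _ => ?_
    simp only [B]
    rw [← hw2 p, ← hw2 q, ← hw2 r]
    ring
  have hok := okumura_matrix (card_le_ge hn) B hBsym htrB
  rw [fold3Y, fold2Y]
  exact hok
end Sym

section Main
variable {n : ℕ}

def Mf (R : Fin n → Fin n → Fin n → Fin n → ℝ) (p q : Fin n × Fin n) : ℝ :=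
  R p.1 q.1 p.2 q.2

def Af (R : Fin n → Fin n → Fin n → Fin n → ℝ) (p q : Fin n × Fin n) : ℝ :=
  R p.1 p.2 q.1 q.2

noncomputable def Mpf (R : Fin n → Fin n → Fin n → Fin n → ℝ) (p q : Fin n × Fin n) : ℝ :=
  (Mf R p q + Mf R p q.swap) / 2

noncomputable def Mmf (R : Fin n → Fin n → Fin n → Fin n → ℝ) (p q : Fin n × Fin n) : ℝ :=
  (Mf R p q - Mf R p q.swap) / 2

lemma sqrt_cube_add {a b : ℝ} (ha : 0 ≤ a) (hb : 0 ≤ b) :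
    Real.sqrt a ^ 3 + Real.sqrt b ^ 3 ≤ Real.sqrt (a + b) ^ 3 := by
  have hab : 0 ≤ a + b := by linarith
  have h1 : Real.sqrt a ^ 3 = a * Real.sqrt a := by
    rw [pow_succ, Real.sq_sqrt ha]
  have h2 : Real.sqrt b ^ 3 = b * Real.sqrt b := by
    rw [pow_succ, Real.sq_sqrt hb]
  have h3 : Real.sqrt (a + b) ^ 3 = (a + b) * Real.sqrt (a + b) := by
    rw [pow_succ, Real.sq_sqrt hab]
  rw [h1, h2, h3]
  have ha' : Real.sqrt a ≤ Real.sqrt (a+b) := Real.sqrt_le_sqrt (by linarith)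
  have hb' : Real.sqrt b ≤ Real.sqrt (a+b) := Real.sqrt_le_sqrt (by linarith)
  nlinarith [Real.sqrt_nonneg a, Real.sqrt_nonneg b, Real.sqrt_nonneg (a+b),
    mul_le_mul_of_nonneg_left ha' ha, mul_le_mul_of_nonneg_left hb' hb]

lemma sum3_add {γ : Type*} [Fintype γ] (f g : γ → γ → γ → ℝ) :
    (∑ p, ∑ q, ∑ r, (f p q r + g p q r))
      = (∑ p, ∑ q, ∑ r, f p q r) + (∑ p, ∑ q, ∑ r, g p q r) := by
  simp [Finset.sum_add_distrib]

end Main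

section Main2
variable {n : ℕ} {R : Fin n → Fin n → Fin n → Fin n → ℝ}

lemma Mf_symm (h1 : ∀ i j k l, R i j k l = -R j i k l)
    (h2 : ∀ i j k l, R i j k l = -R i j l k) (p q : Fin n × Fin n) :
    Mf R p q = Mf R q p := by
  simp only [Mf]
  rw [h1 q.1 p.1 q.2 p.2, h2 p.1 q.1 q.2 p.2]
  ring

lemma Mf_swap_comm (hp : ∀ i j k l, R i j k l = R k l i j) (p q : Fin n × Fin n) :
    Mf R p.swap q = Mf R p q.swap := by
  simp only [Mf, Prod.fst_swap, Prod.snd_swap]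
  exact hp p.2 q.1 p.1 q.2

lemma Mf_swap_swap (hp : ∀ i j k l, R i j k l = R k l i j) (p q : Fin n × Fin n) :
    Mf R p.swap q.swap = Mf R p q := by
  simp only [Mf, Prod.fst_swap, Prod.snd_swap]
  exact hp p.2 q.2 p.1 q.1

lemma Mpf_symm (h1 : ∀ i j k l, R i j k l = -R j i k l)
    (h2 : ∀ i j k l, R i j k l = -R i j l k)
    (hp : ∀ i j k l, R i j k l = R k l i j) (p q : Fin n × Fin n) :
    Mpf R p q = Mpf R q p := by
  simp only [Mpf]
  rw [Mf_symm h1 h2 p q, Mf_symm h1 h2 p q.swap, ← Mf_swap_comm hp q p]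

lemma Mpf_r (hp : ∀ i j k l, R i j k l = R k l i j) (p q : Fin n × Fin n) :
    Mpf R p q.swap = Mpf R p q := by
  simp only [Mpf, Prod.swap_swap]
  ring

lemma Mpf_l (hp : ∀ i j k l, R i j k l = R k l i j) (p q : Fin n × Fin n) :
    Mpf R p.swap q = Mpf R p q := by
  simp only [Mpf]
  rw [Mf_swap_comm hp p q, Mf_swap_swap hp p q]
  ring

lemma Mmf_symm (h1 : ∀ i j k l, R i j k l = -R j i k l)
    (h2 : ∀ i j k l, R i j k l = -R i j l k)
    (hp : ∀ i j k l, R i j k l = R k l i j) (p q : Fin n × Fin n) :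
    Mmf R p q = Mmf R q p := by
  simp only [Mmf]
  rw [Mf_symm h1 h2 p q, Mf_symm h1 h2 p q.swap, ← Mf_swap_comm hp q p]

lemma Mmf_r (p q : Fin n × Fin n) : Mmf R p q.swap = -Mmf R p q := by
  simp only [Mmf, Prod.swap_swap]
  ring

lemma Mmf_l (hp : ∀ i j k l, R i j k l = R k l i j) (p q : Fin n × Fin n) :
    Mmf R p.swap q = -Mmf R p q := by
  simp only [Mmf]
  rw [Mf_swap_comm hp p q, Mf_swap_swap hp p q]
  ring

lemma Af_symm (hp : ∀ i j k l, R i j k l = R k l i j) (p q : Fin n × Fin n) :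
    Af R p q = Af R q p := hp p.1 p.2 q.1 q.2

lemma Af_l (h1 : ∀ i j k l, R i j k l = -R j i k l) (p q : Fin n × Fin n) :
    Af R p.swap q = -Af R p q := by
  simp only [Af, Prod.fst_swap, Prod.snd_swap]
  exact h1 p.2 p.1 q.1 q.2

lemma Af_r (h2 : ∀ i j k l, R i j k l = -R i j l k) (p q : Fin n × Fin n) :
    Af R p q.swap = -Af R p q := by
  simp only [Af, Prod.fst_swap, Prod.snd_swap]
  exact h2 p.1 p.2 q.2 q.1

end Main2

section Consts

lemma sqrt_quarter (X : ℝ) (hX : 0 ≤ X) : Real.sqrt (X / 4) = Real.sqrt X / 2 := by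
  rw [show X / 4 = X / 2^2 by norm_num, Real.sqrt_div hX,
    Real.sqrt_sq (by norm_num : (0:ℝ) ≤ 2)]

lemma const_L {x dL : ℝ} (hn3 : 3 ≤ x) (hdL : 2*dL = x*x - x) :
    (dL - 2) / Real.sqrt (dL * (dL - 1)) =
      (x^2 - x - 4) / Real.sqrt ((x-2)*(x-1)*x*(x+1)) := by
  have hPL0 : (0:ℝ) < x - 2 := by linarith
  have hPL1 : (0:ℝ) < x - 1 := by linarith
  have hPL2 : (0:ℝ) < x := by linarith
  have hPL3 : (0:ℝ) < x + 1 := by linarith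
  have hP : (0:ℝ) < (x-2)*(x-1)*x*(x+1) :=
    mul_pos (mul_pos (mul_pos hPL0 hPL1) hPL2) hPL3
  have hdLv : dL = (x^2 - x)/2 := by nlinarith [hdL]
  have harg : dL * (dL - 1) = ((x-2)*(x-1)*x*(x+1))/4 := by rw [hdLv]; ring
  have hnum : dL - 2 = (x^2 - x - 4)/2 := by rw [hdLv]; ring
  rw [harg, hnum, sqrt_quarter _ hP.le]
  have hs : (0:ℝ) < Real.sqrt ((x-2)*(x-1)*x*(x+1)) := Real.sqrt_pos.mpr hP
  field_simp

lemma const_S {x dS : ℝ} (hn3 : 3 ≤ x) (hdS : 2*dS = x*x + x) :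
    (dS - 2) / Real.sqrt (dS * (dS - 1)) =
      (x^2 + x - 4) / Real.sqrt ((x-1)*x*(x+1)*(x+2)) := by
  have hP : (0:ℝ) < (x-1)*x*(x+1)*(x+2) := by nlinarith
  have hdSv : dS = (x^2 + x)/2 := by nlinarith [hdS]
  have harg : dS * (dS - 1) = ((x-1)*x*(x+1)*(x+2))/4 := by rw [hdSv]; ring
  have hnum : dS - 2 = (x^2 + x - 4)/2 := by rw [hdSv]; ring
  rw [harg, hnum, sqrt_quarter _ hP.le]
  have hs : (0:ℝ) < Real.sqrt ((x-1)*x*(x+1)*(x+2)) := Real.sqrt_pos.mpr hP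
  field_simp

lemma const_mono {x : ℝ} (hn3 : 3 ≤ x) :
    (x^2 - x - 4) / Real.sqrt ((x-2)*(x-1)*x*(x+1)) ≤
      (x^2 + x - 4) / Real.sqrt ((x-1)*x*(x+1)*(x+2)) := by
  have hPL0 : (0:ℝ) < x - 2 := by linarith
  have hPL1 : (0:ℝ) < x - 1 := by linarith
  have hPL2 : (0:ℝ) < x := by linarith
  have hPL3 : (0:ℝ) < x + 1 := by linarith
  have hPL : (0:ℝ) < (x-2)*(x-1)*x*(x+1) :=
    mul_pos (mul_pos (mul_pos hPL0 hPL1) hPL2) hPL3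
  have hPS : (0:ℝ) < (x-1)*x*(x+1)*(x+2) := by nlinarith
  have hsL : (0:ℝ) < Real.sqrt ((x-2)*(x-1)*x*(x+1)) := Real.sqrt_pos.mpr hPL
  have hsS : (0:ℝ) < Real.sqrt ((x-1)*x*(x+1)*(x+2)) := Real.sqrt_pos.mpr hPS
  have hnumL : (0:ℝ) ≤ x^2 - x - 4 := by nlinarith
  have hnumS : (0:ℝ) ≤ x^2 + x - 4 := by nlinarith
  rw [div_le_div_iff₀ hsL hsS]
  have l1 : (x^2 - x - 4) * Real.sqrt ((x-1)*x*(x+1)*(x+2))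
      = Real.sqrt ((x^2-x-4)^2 * ((x-1)*x*(x+1)*(x+2))) := by
    rw [Real.sqrt_mul (sq_nonneg _), Real.sqrt_sq hnumL]
  have r1 : (x^2 + x - 4) * Real.sqrt ((x-2)*(x-1)*x*(x+1))
      = Real.sqrt ((x^2+x-4)^2 * ((x-2)*(x-1)*x*(x+1))) := by
    rw [Real.sqrt_mul (sq_nonneg _), Real.sqrt_sq hnumS]
  rw [l1, r1]
  apply Real.sqrt_le_sqrt
  have key : (x^2+x-4)^2 * ((x-2)*(x-1)*x*(x+1)) - (x^2-x-4)^2 * ((x-1)*x*(x+1)*(x+2))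
      = (x-1)*x*(x+1) * (12*x^2 - 64) := by ring
  have hfac : (0:ℝ) ≤ (x-1)*x*(x+1) := by nlinarith
  have h12 : (0:ℝ) ≤ 12*x^2 - 64 := by nlinarith
  nlinarith [mul_nonneg hfac h12, key]

lemma const_L_nonneg {x : ℝ} (hn3 : 3 ≤ x) :
    0 ≤ (x^2 - x - 4) / Real.sqrt ((x-2)*(x-1)*x*(x+1)) :=
  div_nonneg (by nlinarith) (Real.sqrt_nonneg _)


lemma const_S_nonneg {x : ℝ} (hn3 : 3 ≤ x) :
    0 ≤ (x^2 + x - 4) / Real.sqrt ((x-1)*x*(x+1)*(x+2)) :=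
  div_nonneg (by nlinarith) (Real.sqrt_nonneg _)

end Consts

section Decomp
variable {n : ℕ} {R : Fin n → Fin n → Fin n → Fin n → ℝ}

lemma Mf_split (p q : Fin n × Fin n) : Mf R p q = Mpf R p q + Mmf R p q := by
  simp only [Mpf, Mmf]; ring

lemma decomp2 (hp : ∀ i j k l, R i j k l = R k l i j) :
    (∑ p, ∑ q, (Mf R p q)^2)
      = (∑ p, ∑ q, (Mpf R p q)^2) + (∑ p, ∑ q, (Mmf R p q)^2) := by
  have e : ∀ p q : Fin n × Fin n, (Mf R p q)^2
      = ((Mpf R p q)^2 + (Mmf R p q)^2) + 2 * (Mpf R p q * Mmf R p q) := by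
    intro p q; rw [Mf_split p q]; ring
  have hcross : ∀ p : Fin n × Fin n, (∑ q, Mpf R p q * Mmf R p q) = 0 := by
    intro p
    exact sum_asym (fun q => Mpf R p q * Mmf R p q) (fun q => by
      simp only [Mpf_r hp p q, Mmf_r p q]; ring)
  calc (∑ p, ∑ q, (Mf R p q)^2)
      = ∑ p : Fin n × Fin n, ((∑ q, ((Mpf R p q)^2 + (Mmf R p q)^2))
          + 2 * ∑ q, (Mpf R p q * Mmf R p q)) := by
        refine Finset.sum_congr rfl fun p _ => ?_
        rw [Finset.mul_sum, ← Finset.sum_add_distrib]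
        exact Finset.sum_congr rfl fun q _ => e p q
    _ = ∑ p : Fin n × Fin n, (∑ q, ((Mpf R p q)^2 + (Mmf R p q)^2)) := by
        refine Finset.sum_congr rfl fun p _ => ?_
        rw [hcross p]; ring
    _ = _ := by
        rw [← Finset.sum_add_distrib]
        exact Finset.sum_congr rfl fun p _ => Finset.sum_add_distrib

lemma decomp3 (hp : ∀ i j k l, R i j k l = R k l i j) :
    (∑ p, ∑ q, ∑ r, Mf R p q * Mf R q r * Mf R r p)
      = (∑ p, ∑ q, ∑ r, Mpf R p q * Mpf R q r * Mpf R r p)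
        + (∑ p, ∑ q, ∑ r, Mmf R p q * Mmf R q r * Mmf R r p) := by
  have e : ∀ p q r : Fin n × Fin n, Mf R p q * Mf R q r * Mf R r p
      = (Mpf R p q * Mpf R q r * Mpf R r p + Mmf R p q * Mmf R q r * Mmf R r p)
        + (Mpf R p q * Mpf R q r * Mmf R r p
          + (Mmf R p q * Mmf R q r * Mpf R r p
          + (Mpf R p q * Mmf R q r * Mpf R r p
          + (Mmf R p q * Mpf R q r * Mpf R r p
          + (Mpf R p q * Mmf R q r * Mmf R r p
          + Mmf R p q * Mpf R q r * Mmf R r p))))) := by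
    intro p q r; rw [Mf_split p q, Mf_split q r, Mf_split r p]; ring
  have hstep : (∑ p, ∑ q, ∑ r, Mf R p q * Mf R q r * Mf R r p)
      = ((∑ p, ∑ q, ∑ r, (Mpf R p q * Mpf R q r * Mpf R r p
          + Mmf R p q * Mmf R q r * Mmf R r p)))
        + ((∑ p, ∑ q, ∑ r, (Mpf R p q * Mpf R q r * Mmf R r p
          + (Mmf R p q * Mmf R q r * Mpf R r p
          + (Mpf R p q * Mmf R q r * Mpf R r p
          + (Mmf R p q * Mpf R q r * Mpf R r p
          + (Mpf R p q * Mmf R q r * Mmf R r p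
          + Mmf R p q * Mpf R q r * Mmf R r p))))))) := by
    rw [← sum3_add]
    exact Finset.sum_congr rfl fun p _ => Finset.sum_congr rfl fun q _ =>
      Finset.sum_congr rfl fun r _ => e p q r
  -- vanishing of the six cross terms
  have z1 : (∑ p, ∑ q, ∑ r, Mpf R p q * Mpf R q r * Mmf R r p) = 0 :=
    Finset.sum_eq_zero fun p _ => Finset.sum_eq_zero fun q _ =>
      sum_asym (fun r => Mpf R p q * Mpf R q r * Mmf R r p) (fun r => by
        simp only [Mpf_r hp q r, Mmf_l hp r p]; ring)
  have z6 : (∑ p, ∑ q, ∑ r, Mmf R p q * Mpf R q r * Mmf R r p) = 0 :=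
    Finset.sum_eq_zero fun p _ => Finset.sum_eq_zero fun q _ =>
      sum_asym (fun r => Mmf R p q * Mpf R q r * Mmf R r p) (fun r => by
        simp only [Mpf_r hp q r, Mmf_l hp r p]; ring)
  have z2 : (∑ p, ∑ q, ∑ r, Mmf R p q * Mmf R q r * Mpf R r p) = 0 :=
    Finset.sum_eq_zero fun p _ => Finset.sum_eq_zero fun q _ =>
      sum_asym (fun r => Mmf R p q * Mmf R q r * Mpf R r p) (fun r => by
        simp only [Mmf_r q r, Mpf_l hp r p]; ring)
  have z3 : (∑ p, ∑ q, ∑ r, Mpf R p q * Mmf R q r * Mpf R r p) = 0 := by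
    refine Finset.sum_eq_zero fun p _ => ?_
    refine sum_asym (fun q => ∑ r, Mpf R p q * Mmf R q r * Mpf R r p) fun q => ?_
    rw [← Finset.sum_neg_distrib]
    exact Finset.sum_congr rfl fun r _ => by
      simp only [Mpf_r hp p q, Mmf_l hp q r]; ring
  have z4 : (∑ p, ∑ q, ∑ r, Mmf R p q * Mpf R q r * Mpf R r p) = 0 := by
    refine Finset.sum_eq_zero fun p _ => ?_
    refine sum_asym (fun q => ∑ r, Mmf R p q * Mpf R q r * Mpf R r p) fun q => ?_
    rw [← Finset.sum_neg_distrib]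
    exact Finset.sum_congr rfl fun r _ => by
      simp only [Mmf_r p q, Mpf_l hp q r]; ring
  have z5 : (∑ p, ∑ q, ∑ r, Mpf R p q * Mmf R q r * Mmf R r p) = 0 := by
    refine Finset.sum_eq_zero fun p _ => ?_
    refine sum_asym (fun q => ∑ r, Mpf R p q * Mmf R q r * Mmf R r p) fun q => ?_
    rw [← Finset.sum_neg_distrib]
    exact Finset.sum_congr rfl fun r _ => by
      simp only [Mpf_r hp p q, Mmf_l hp q r]; ring
  rw [hstep, sum3_add, sum3_add, sum3_add, sum3_add, sum3_add, sum3_add,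
    z1, z2, z3, z4, z5, z6]
  ring
end Decomp

set_option maxHeartbeats 2000000 in
/-- Estimate (2.13) of the paper, for an algebraic curvature tensor `R`
with vanishing double trace. -/
theorem stmt_9 (n : ℕ) (hn : 3 ≤ n)
    (R : Fin n → Fin n → Fin n → Fin n → ℝ)
    (hanti1 : ∀ i j k l, R i j k l = -R j i k l)
    (hanti2 : ∀ i j k l, R i j k l = -R i j l k)
    (hpair : ∀ i j k l, R i j k l = R k l i j)
    (hbianchi : ∀ i j k l, R i j k l + R i k l j + R i l j k = 0)
    (htr2 : ∑ i, ∑ j, R i j i j = 0) :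
    2 * |∑ i, ∑ j, ∑ k, ∑ l, ∑ h, ∑ m, R i j l k * R j h k m * R h i m l| +
      (1 / 2) * |∑ i, ∑ j, ∑ k, ∑ l, ∑ h, ∑ m, R i j l k * R h m i j * R l k h m| ≤
      (2 * ((n : ℝ) ^ 2 + n - 4) /
          Real.sqrt (((n : ℝ) - 1) * n * ((n : ℝ) + 1) * ((n : ℝ) + 2)) +
        ((n : ℝ) ^ 2 - n - 4) /
          (2 * Real.sqrt (((n : ℝ) - 2) * ((n : ℝ) - 1) * n * ((n : ℝ) + 1)))) *
        (Real.sqrt (∑ i, ∑ j, ∑ k, ∑ l, (R i j k l) ^ 2)) ^ 3 := by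
  have hn3 : (3 : ℝ) ≤ (n : ℝ) := by exact_mod_cast hn
  -- trace identities
  have htrM : (∑ p : Fin n × Fin n, Mf R p p) = 0 := by
    rw [Fintype.sum_prod_type]
    refine Finset.sum_eq_zero fun i _ => Finset.sum_eq_zero fun l _ => ?_
    have h := hanti1 i i l l
    simp only [Mf]
    linarith
  have htrMs : (∑ p : Fin n × Fin n, Mf R p p.swap) = 0 := by
    rw [Fintype.sum_prod_type]
    have e : ∀ i l : Fin n, Mf R (i, l) (Prod.swap (i, l)) = -R i l i l := by
      intro i l
      simp only [Mf, Prod.swap_prod_mk]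
      exact hanti2 i l l i
    rw [Finset.sum_congr rfl fun i _ => Finset.sum_congr rfl fun l _ => e i l]
    have e2 : (∑ i : Fin n, ∑ l : Fin n, -R i l i l)
        = -(∑ i : Fin n, ∑ l : Fin n, R i l i l) := by
      simp [Finset.sum_neg_distrib]
    rw [e2, htr2, neg_zero]
  have htrMp : (∑ p : Fin n × Fin n, Mpf R p p) = 0 := by
    have hsum : (∑ p : Fin n × Fin n, Mpf R p p)
        = ((∑ p : Fin n × Fin n, Mf R p p) + ∑ p : Fin n × Fin n, Mf R p p.swap) / 2 := by
      rw [← Finset.sum_add_distrib, Finset.sum_div]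
      exact Finset.sum_congr rfl fun p _ => rfl
    rw [hsum, htrM, htrMs]
    norm_num
  have htrMm : (∑ p : Fin n × Fin n, Mmf R p p) = 0 := by
    have hsum : (∑ p : Fin n × Fin n, Mmf R p p)
        = ((∑ p : Fin n × Fin n, Mf R p p) - ∑ p : Fin n × Fin n, Mf R p p.swap) / 2 := by
      rw [← Finset.sum_sub_distrib, Finset.sum_div]
      exact Finset.sum_congr rfl fun p _ => rfl
    rw [hsum, htrM, htrMs]
    norm_num
  have htrA : (∑ p : Fin n × Fin n, Af R p p) = 0 := by
    rw [Fintype.sum_prod_type]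
    simp only [Af]
    exact htr2
  -- Okumura estimates
  have hokS := okumura_sym hn (Mpf R) (fun p q => Mpf_symm hanti1 hanti2 hpair p q)
    (fun p q => Mpf_l hpair p q) (fun p q => Mpf_r hpair p q) htrMp
  have hokL := okumura_antisym hn (Mmf R) (fun p q => Mmf_symm hanti1 hanti2 hpair p q)
    (fun p q => Mmf_l hpair p q) (fun p q => Mmf_r p q) htrMm
  have hokA := okumura_antisym hn (Af R) (fun p q => Af_symm hpair p q)
    (fun p q => Af_l hanti1 p q) (fun p q => Af_r hanti2 p q) htrA
  -- sum identities
  have hS1 : (∑ i, ∑ j, ∑ k, ∑ l, ∑ h, ∑ m, R i j l k * R j h k m * R h i m l)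
      = ∑ p : Fin n × Fin n, ∑ q, ∑ r, Mf R p q * Mf R q r * Mf R r p := by
    simp only [Fintype.sum_prod_type, Mf]
    refine Finset.sum_congr rfl fun i _ => ?_
    exact (sum_rot (fun l j k => ∑ h, ∑ m, R i j l k * R j h k m * R h i m l)).symm
  have hS2 : (∑ i, ∑ j, ∑ k, ∑ l, ∑ h, ∑ m, R i j l k * R h m i j * R l k h m)
      = ∑ p : Fin n × Fin n, ∑ q, ∑ r, Af R p q * Af R q r * Af R r p := by
    simp only [Fintype.sum_prod_type, Af]
    refine Finset.sum_congr rfl fun i _ => Finset.sum_congr rfl fun j _ => ?_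
    rw [Finset.sum_comm]
    exact Finset.sum_congr rfl fun l _ => Finset.sum_congr rfl fun k _ =>
      Finset.sum_congr rfl fun h _ => Finset.sum_congr rfl fun m _ => by ring
  have hNA : (∑ i, ∑ j, ∑ k, ∑ l, (R i j k l) ^ 2)
      = ∑ p : Fin n × Fin n, ∑ q, (Af R p q) ^ 2 := by
    simp only [Fintype.sum_prod_type, Af]
  have hNM : (∑ i, ∑ j, ∑ k, ∑ l, (R i j k l) ^ 2)
      = ∑ p : Fin n × Fin n, ∑ q, (Mf R p q) ^ 2 := by
    simp only [Fintype.sum_prod_type, Mf]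
    exact Finset.sum_congr rfl fun i _ => Finset.sum_comm
  -- nonnegativity of the square sums
  have hann : 0 ≤ ∑ p : Fin n × Fin n, ∑ q, (Mpf R p q) ^ 2 :=
    Finset.sum_nonneg fun p _ => Finset.sum_nonneg fun q _ => sq_nonneg _
  have hbnn : 0 ≤ ∑ p : Fin n × Fin n, ∑ q, (Mmf R p q) ^ 2 :=
    Finset.sum_nonneg fun p _ => Finset.sum_nonneg fun q _ => sq_nonneg _
  -- cardinalities
  have hdL : 2 * ((Fintype.card {p : Fin n × Fin n // p.1 < p.2} : ℝ))
      = (n : ℝ) * n - n := by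
    have h := two_card_lt (n := n)
    have h' : ((2 * (Finset.univ.filter
        (fun p : Fin n × Fin n => p.1 < p.2)).card + n : ℕ) : ℝ) = ((n * n : ℕ) : ℝ) := by
      rw [h]
    push_cast at h'
    rw [card_subtype_lt]
    push_cast
    linarith
  have hdS : 2 * ((Fintype.card {p : Fin n × Fin n // p.1 ≤ p.2} : ℝ))
      = (n : ℝ) * n + n := by
    have h := card_subtype_le (n := n)
    have h2 := two_card_lt (n := n)
    have h1' : ((Fintype.card {p : Fin n × Fin n // p.1 ≤ p.2} : ℕ) : ℝ)
        = (((Finset.univ.filter (fun p : Fin n × Fin n => p.1 < p.2)).card + n : ℕ) : ℝ) := by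
      rw [h]
    have h3 : ((2 * (Finset.univ.filter
        (fun p : Fin n × Fin n => p.1 < p.2)).card + n : ℕ) : ℝ) = ((n * n : ℕ) : ℝ) := by
      rw [h2]
    push_cast at h1' h3
    linarith
  -- rewrite Okumura constants
  rw [const_S hn3 hdS] at hokS
  rw [const_L hn3 hdL] at hokL
  rw [const_L hn3 hdL] at hokA
  -- abbreviations
  set cS : ℝ := ((n : ℝ)^2 + n - 4) /
    Real.sqrt (((n : ℝ)-1)*n*((n : ℝ)+1)*((n : ℝ)+2)) with hcS
  set cL : ℝ := ((n : ℝ)^2 - n - 4) /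
    Real.sqrt (((n : ℝ)-2)*((n : ℝ)-1)*n*((n : ℝ)+1)) with hcL
  have hcSnn : 0 ≤ cS := const_S_nonneg hn3
  have hcLnn : 0 ≤ cL := const_L_nonneg hn3
  have hmono : cL ≤ cS := const_mono hn3
  -- the norm quantity
  set N : ℝ := ∑ i, ∑ j, ∑ k, ∑ l, (R i j k l) ^ 2 with hNdef
  have hNnn : 0 ≤ N := by
    rw [hNdef]
    exact Finset.sum_nonneg fun i _ => Finset.sum_nonneg fun j _ =>
      Finset.sum_nonneg fun k _ => Finset.sum_nonneg fun l _ => sq_nonneg _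
  have hab : (∑ p : Fin n × Fin n, ∑ q, (Mpf R p q) ^ 2)
      + (∑ p : Fin n × Fin n, ∑ q, (Mmf R p q) ^ 2) = N := by
    rw [hNM, decomp2 hpair]
  -- bound for the first term
  have hbound1 : |∑ i, ∑ j, ∑ k, ∑ l, ∑ h, ∑ m, R i j l k * R j h k m * R h i m l|
      ≤ cS * Real.sqrt N ^ 3 := by
    rw [hS1, decomp3 hpair]
    calc |(∑ p : Fin n × Fin n, ∑ q, ∑ r, Mpf R p q * Mpf R q r * Mpf R r p)
        + (∑ p : Fin n × Fin n, ∑ q, ∑ r, Mmf R p q * Mmf R q r * Mmf R r p)|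
        ≤ |∑ p : Fin n × Fin n, ∑ q, ∑ r, Mpf R p q * Mpf R q r * Mpf R r p|
          + |∑ p : Fin n × Fin n, ∑ q, ∑ r, Mmf R p q * Mmf R q r * Mmf R r p| :=
          abs_add_le _ _
      _ ≤ cS * Real.sqrt (∑ p : Fin n × Fin n, ∑ q, (Mpf R p q) ^ 2) ^ 3
          + cL * Real.sqrt (∑ p : Fin n × Fin n, ∑ q, (Mmf R p q) ^ 2) ^ 3 :=
          add_le_add hokS hokL
      _ ≤ cS * Real.sqrt (∑ p : Fin n × Fin n, ∑ q, (Mpf R p q) ^ 2) ^ 3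
          + cS * Real.sqrt (∑ p : Fin n × Fin n, ∑ q, (Mmf R p q) ^ 2) ^ 3 := by
          have := pow_nonneg (Real.sqrt_nonneg
            (∑ p : Fin n × Fin n, ∑ q, (Mmf R p q) ^ 2)) 3
          nlinarith [hmono, this]
      _ = cS * (Real.sqrt (∑ p : Fin n × Fin n, ∑ q, (Mpf R p q) ^ 2) ^ 3
          + Real.sqrt (∑ p : Fin n × Fin n, ∑ q, (Mmf R p q) ^ 2) ^ 3) := by ring
      _ ≤ cS * Real.sqrt N ^ 3 := by
          have h := sqrt_cube_add hann hbnn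
          rw [hab] at h
          exact mul_le_mul_of_nonneg_left h hcSnn
  -- bound for the second term
  have hbound2 : |∑ i, ∑ j, ∑ k, ∑ l, ∑ h, ∑ m, R i j l k * R h m i j * R l k h m|
      ≤ cL * Real.sqrt N ^ 3 := by
    rw [hS2]
    rw [← hNA] at hokA
    exact hokA
  -- conclusion
  have hcoef : 2 * ((n : ℝ) ^ 2 + n - 4) /
        Real.sqrt (((n : ℝ) - 1) * n * ((n : ℝ) + 1) * ((n : ℝ) + 2)) +
      ((n : ℝ) ^ 2 - n - 4) /
        (2 * Real.sqrt (((n : ℝ) - 2) * ((n : ℝ) - 1) * n * ((n : ℝ) + 1)))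
      = 2 * cS + cL / 2 := by
    rw [hcS, hcL]
    ring
  rw [hcoef]
  have hNpow : 0 ≤ Real.sqrt N ^ 3 := pow_nonneg (Real.sqrt_nonneg N) 3
  nlinarith [hbound1, hbound2, hNpow]
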